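/- Let 𝒫 = ⟨P, ⊴⟩ be a preorder PR on a Kripke structure. If Rel(𝒫) is a simulation, then: (i) B ⊴ C, b ∈ B, c ∈ C imply ℓ(b) = ℓ(c); (ii) B →∃ C and B ⊴ D imply D →∃ μ𝒫(C); and (iii) for every C ∈ P and every block B ∈ P, either B ⊆ pre(μ𝒫(C)) or B ∩ pre(μ𝒫(C)) = ∅. -/
import Mathlib


/-- `pre(T) = {s | ∃ t ∈ T, s → t}`. -/
def preR {α : Type*} (tr : α → α → Prop) (T : Set α) : Set α :=
  {s | ∃ t ∈ T, tr s t}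

/-- `S₁ →∃ S₂` iff some state of `S₁` has a transition into `S₂`. -/
def exE {α : Type*} (tr : α → α → Prop) (S T : Set α) : Prop :=
  ∃ s ∈ S, ∃ t ∈ T, tr s t

/-- `μ𝒫(X) = ⋃ {C ∈ P | ∃ s ∈ X, P(s) ⊴ C}`, with the partition given by the
block map `blk`. -/
def muB {α : Type*} (blk : α → Set α) (ord : Set α → Set α → Prop)
    (X : Set α) : Set α :=
  {y | ∃ s ∈ X, ord (blk s) (blk y)}

/-- `R` is a simulation on the Kripke structure `(α, tr, lab)`. -/
def IsSim {α AP : Type*} (tr : α → α → Prop) (lab : α → Set AP)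
    (R : α → α → Prop) : Prop :=
  ∀ s s', R s s' → lab s = lab s' ∧ ∀ t, tr s t → ∃ t', tr s' t' ∧ R t t'

/-- Necessity part of the characterization theorem: if `𝒫 = ⟨P,⊴⟩` is a
preorder PR and `Rel(𝒫)` is a simulation, then conditions (i), (ii), (iii)
hold. -/
theorem stmt3 {α AP : Type*} (tr : α → α → Prop) (lab : α → Set AP)
    (blk : α → Set α)
    (hmem : ∀ s, s ∈ blk s)
    (hrep : ∀ s t, s ∈ blk t → blk s = blk t)
    (ord : Set α → Set α → Prop)
    (hrefl : ∀ s : α, ord (blk s) (blk s))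
    (htrans : ∀ s t u : α, ord (blk s) (blk t) → ord (blk t) (blk u) →
      ord (blk s) (blk u))
    (hsim : IsSim tr lab (fun s t => ord (blk s) (blk t))) :
    (∀ b c : α, ord (blk b) (blk c) → ∀ x ∈ blk b, ∀ y ∈ blk c,
      lab x = lab y) ∧
    (∀ b c d : α, exE tr (blk b) (blk c) → ord (blk b) (blk d) →
      exE tr (blk d) (muB blk ord (blk c))) ∧
    (∀ c b : α, blk b ⊆ preR tr (muB blk ord (blk c)) ∨
      blk b ∩ preR tr (muB blk ord (blk c)) = ∅) := by
  refine ⟨?_, ?_, ?_⟩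
  · intro b c hbc x hx y hy
    have hx' := hrep x b hx
    have hy' := hrep y c hy
    exact (hsim x y (show ord (blk x) (blk y) by rw [hx', hy']; exact hbc)).1
  · rintro b c d ⟨s, hs, t, ht, hst⟩ hbd
    have hsd : ord (blk s) (blk d) := by rw [hrep s b hs]; exact hbd
    obtain ⟨t', htr', hord'⟩ := (hsim s d hsd).2 t hst
    exact ⟨d, hmem d, t', ⟨t, ht, hord'⟩, htr'⟩
  · intro c b
    by_cases h : ∃ x ∈ blk b, x ∈ preR tr (muB blk ord (blk c))
    · left
      obtain ⟨x, hx, t, htmu, hxt⟩ := h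
      intro y hy
      have hxy : ord (blk x) (blk y) := by
        rw [hrep x b hx, hrep y b hy]; exact hrefl b
      obtain ⟨t', htr', hord'⟩ := (hsim x y hxy).2 t hxt
      obtain ⟨s, hs, hst⟩ := htmu
      exact ⟨t', ⟨s, hs, htrans s t t' hst hord'⟩, htr'⟩
    · right
      ext x
      simp only [Set.mem_inter_iff, Set.mem_empty_iff_false, iff_false, not_and]
      intro hx hpre
      exact h ⟨x, hx, hpre⟩
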